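/- arXiv:1012.5613 — 2 statements merged into one kernel-verified Lean document; each statement's English description precedes it below -/
import Mathlib

section
/- Let p be a prime and let x be a solution of ẍ + V'_x(t,x) = 0 with x(t + p k₂ T₀) = x(t) + p k₁ for all t, but such that x is not k₂T₀-periodic modulo ℤ (i.e. there is no integer m with x(t + k₂T₀) = x(t) + m for all t; x is non-fundamental). Then the p functions x(t), x(t + k₂T₀), x(t + 2k₂T₀), …, x(t + (p-1)k₂T₀) are pairwise distinct solutions. -/
/-- Iterating an integer shift relation. -/
lemma zmul_shift (x : ℝ → ℝ) (c : ℝ) (n : ℤ) (m : ℤ)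
    (h : ∀ t, x (t + (n : ℝ) * c) = x t + (m : ℝ)) (k : ℤ) :
    ∀ t, x (t + ((k * n : ℤ) : ℝ) * c) = x t + ((k * m : ℤ) : ℝ) := by
  induction k using Int.induction_on with
  | zero => simp
  | succ k ih =>
    intro t
    have h1 := h (t + ((k * n : ℤ) : ℝ) * c)
    have h2 := ih t
    have e : t + (((k + 1) * n : ℤ) : ℝ) * c = t + ((k * n : ℤ) : ℝ) * c + (n : ℝ) * c := by
      push_cast; ring
    rw [e, h1, h2]; push_cast; ring
  | pred k ih =>
    intro t
    have h1 := h (t + (((-k - 1) * n : ℤ) : ℝ) * c)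
    have e : t + (((-k - 1) * n : ℤ) : ℝ) * c + (n : ℝ) * c = t + ((-k * n : ℤ) : ℝ) * c := by
      push_cast; ring
    rw [e] at h1
    have h2 := ih t
    rw [h2] at h1
    have := h1.symm
    push_cast at this ⊢
    linarith

/-- if `x` is a non-fundamental solution with winding `p k₁` in time
`p k₂ T₀`, `p` prime, then the `p` time shifts `x(· + i k₂ T₀)`, `i = 0, …, p-1`,
are pairwise distinct (modulo integer shift) solutions. -/
theorem shifts_of_nonfundamental_distinct (V : ℝ → ℝ → ℝ) (T₀ : ℝ) (hT₀ : 0 < T₀)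
    (hV : ContDiff ℝ 2 (Function.uncurry V))
    (hVx : ∀ t y, V t (y + 1) = V t y)
    (hVt : ∀ t y, V (t + T₀) y = V t y)
    (k₁ : ℤ) (k₂ : ℕ) (hk₂ : 0 < k₂) (p : ℕ) (hp : p.Prime)
    (x : ℝ → ℝ) (hx : ContDiff ℝ 2 x)
    (hsol : ∀ t, deriv (deriv x) t + deriv (V t) (x t) = 0)
    (hwind : ∀ t, x (t + p * (k₂ * T₀)) = x t + p * k₁)
    (hnonfund : ¬ ∃ m : ℤ, ∀ t, x (t + k₂ * T₀) = x t + m) :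
    (∀ i : ℕ, i < p →
      ∀ t, deriv (deriv fun s => x (s + i * (k₂ * T₀))) t
          + deriv (V t) (x (t + i * (k₂ * T₀))) = 0) ∧
    (∀ i j : ℕ, i < p → j < p → i ≠ j →
      ¬ ∃ m : ℤ, ∀ t, x (t + i * (k₂ * T₀)) = x (t + j * (k₂ * T₀)) + m) := by
  -- periodicity of V in t for multiples of T₀
  have hVn : ∀ n : ℕ, ∀ t y, V (t + n * T₀) y = V t y := by
    intro n
    induction n with
    | zero => intro t y; simp
    | succ n ih =>
      intro t y
      have e : t + ((n : ℝ) + 1) * T₀ = (t + n * T₀) + T₀ := by ring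
      push_cast
      rw [e, hVt, ih]
  constructor
  · intro i _ t
    set c : ℝ := (i : ℝ) * (k₂ * T₀) with hc
    have hd1 : deriv (fun s => x (s + c)) = fun s => deriv x (s + c) := by
      funext s; exact deriv_comp_add_const x c s
    have hd2 : deriv (deriv fun s => x (s + c)) t = deriv (deriv x) (t + c) := by
      rw [hd1]; exact deriv_comp_add_const (deriv x) c t
    have hVeq : V (t + c) = V t := by
      funext y
      have := hVn (i * k₂) t y
      have e : t + c = t + (↑(i * k₂) : ℝ) * T₀ := by push_cast [hc]; ring
      rw [e, this]
    have := hsol (t + c)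
    rw [hVeq] at this
    rw [hd2]
    exact this
  · intro i j hi hj hij
    rintro ⟨m, hm⟩
    set c : ℝ := (k₂ : ℝ) * T₀ with hc
    -- shift relation with d = i - j
    have hd : ∀ t, x (t + (((i : ℤ) - j : ℤ) : ℝ) * c) = x t + (m : ℝ) := by
      intro t
      have := hm (t - (j : ℝ) * c)
      have e1 : t - (j : ℝ) * c + (i : ℝ) * c = t + (((i : ℤ) - j : ℤ) : ℝ) * c := by
        push_cast; ring
      have e2 : t - (j : ℝ) * c + (j : ℝ) * c = t := by ring
      rw [e1, e2] at this
      exact this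
    -- shift relation with p
    have hpshift : ∀ t, x (t + ((p : ℤ) : ℝ) * c) = x t + (((p : ℤ) * k₁ : ℤ) : ℝ) := by
      intro t
      have := hwind t
      push_cast at this ⊢
      rw [hc]; rw [← mul_assoc] at this ⊢; exact this
    -- d is coprime to p
    set d : ℤ := (i : ℤ) - j with hdd
    have hdne : d ≠ 0 := by
      simp only [hdd, sub_ne_zero]
      exact_mod_cast hij
    have hlt : d.natAbs < p := by
      rcases Int.lt_or_lt_of_ne hdne with h | h
      · have : d.natAbs = (j - i : ℕ) := by omega
        omega
      · have : d.natAbs = (i - j : ℕ) := by omega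
        omega
    have hpos : 0 < d.natAbs := Int.natAbs_pos.mpr hdne
    have hndvd : ¬ p ∣ d.natAbs := fun h => absurd (Nat.le_of_dvd hpos h) (by omega)
    have hcop : IsCoprime d (p : ℤ) := by
      rw [Int.isCoprime_iff_gcd_eq_one, Int.gcd]
      simpa using ((Nat.Prime.coprime_iff_not_dvd hp).mpr hndvd).symm
    obtain ⟨a, b, hab⟩ := hcop
    apply hnonfund
    refine ⟨a * m + b * ((p : ℤ) * k₁), ?_⟩
    intro t
    have h1 := zmul_shift x c d m hd a t
    have h2 := zmul_shift x c (p : ℤ) ((p : ℤ) * k₁) hpshift b (t + ((a * d : ℤ) : ℝ) * c)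
    have e : t + ((a * d : ℤ) : ℝ) * c + ((b * p : ℤ) : ℝ) * c = t + c := by
      have h' : ((a : ℝ)) * d + b * p = 1 := by exact_mod_cast congrArg (Int.cast : ℤ → ℝ) hab
      push_cast
      linear_combination c * h'
    rw [e] at h2
    rw [h1] at h2
    rw [hc] at h2
    rw [h2]
    push_cast
    ring
end

section
/- Under the same assumptions, the action value f(x) = (1/(k₂T₀)) ∫₀^{k₂T₀} ( ½|ẋ(t)|² − V(t, x(t)) ) dt of any solution x with winding condition x(t + k₂T₀) = x(t) + k₁ is bounded in absolute value by a constant depending only on V, k₁, k₂ and T₀ (not on the particular solution). -/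
open Set Function

/-- A continuous doubly periodic function on `ℝ²` is bounded. -/
lemma bdd_of_doubly_periodic (h : ℝ → ℝ → ℝ) (T₀ : ℝ) (hT₀ : 0 < T₀)
    (hc : Continuous (Function.uncurry h))
    (hx : ∀ t y, h t (y + 1) = h t y) (ht : ∀ t y, h (t + T₀) y = h t y) :
    ∃ M : ℝ, ∀ t y, |h t y| ≤ M := by
  obtain ⟨M, hM⟩ := IsCompact.exists_bound_of_continuousOn
    ((isCompact_Icc (a := (0:ℝ)) (b := T₀)).prod (isCompact_Icc (a := (0:ℝ)) (b := 1)))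
    hc.continuousOn
  refine ⟨M, fun t y => ?_⟩
  obtain ⟨t', ht', het⟩ :=
    Function.Periodic.exists_mem_Ico₀ (f := fun s => h s y) (fun s => ht s y) hT₀ t
  obtain ⟨y', hy', hey⟩ :=
    Function.Periodic.exists_mem_Ico₀ (f := fun z => h t' z) (fun z => hx t' z) one_pos y
  have := hM (t', y') ⟨Ico_subset_Icc_self ht', Ico_subset_Icc_self hy'⟩
  simp only [Function.uncurry, Real.norm_eq_abs] at this
  rw [het, hey]; exact this

/-- The `fderiv` of a function invariant under a translation is invariant too. -/
lemma fderiv_periodic_shift {g : ℝ × ℝ → ℝ} (hg : Differentiable ℝ g) (v : ℝ × ℝ)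
    (hper : ∀ q, g (q + v) = g q) (p : ℝ × ℝ) :
    fderiv ℝ g (p + v) = fderiv ℝ g p := by
  have h1 : HasFDerivAt g (fderiv ℝ g (p + v)) (p + v) := (hg (p + v)).hasFDerivAt
  have h2 : HasFDerivAt (fun q => g (q + v)) (fderiv ℝ g (p + v)) p := by
    have := h1.comp p ((hasFDerivAt_id p).add_const v)
    exact this
  have h3 : HasFDerivAt g (fderiv ℝ g (p + v)) p := by
    have he : (fun q => g (q + v)) = g := funext hper
    rwa [he] at h2
  exact h3.fderiv.symm

/-- the action value of any winding solution is bounded by a constant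
depending only on `V`, `k₁`, `k₂`, `T₀`. -/
theorem action_bound (V : ℝ → ℝ → ℝ) (T₀ : ℝ) (hT₀ : 0 < T₀)
    (hV : ContDiff ℝ 2 (Function.uncurry V))
    (hVx : ∀ t y, V t (y + 1) = V t y)
    (hVt : ∀ t y, V (t + T₀) y = V t y)
    (k₁ : ℤ) (k₂ : ℕ) (hk₂ : 0 < k₂) :
    ∃ B : ℝ, ∀ x : ℝ → ℝ, ContDiff ℝ 2 x →
      (∀ t, deriv (deriv x) t + deriv (V t) (x t) = 0) →
      (∀ t, x (t + k₂ * T₀) = x t + k₁) →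
      |(k₂ * T₀ : ℝ)⁻¹ * ∫ t in (0:ℝ)..(k₂ * T₀), ((deriv x t) ^ 2 / 2 - V t (x t))| ≤ B := by
  set g := Function.uncurry V with hgdef
  have hgd : Differentiable ℝ g := hV.differentiable (by norm_num)
  -- bound on V
  obtain ⟨M₀, hM₀⟩ := bdd_of_doubly_periodic V T₀ hT₀ hV.continuous hVx hVt
  have hM₀0 : 0 ≤ M₀ := le_trans (abs_nonneg _) (hM₀ 0 0)
  -- the time-partial of V and its bound
  set W : ℝ → ℝ → ℝ := fun t y => fderiv ℝ g (t, y) (1, 0) with hWdef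
  have hWc : Continuous (Function.uncurry W) := by
    have h1 : Continuous fun p : ℝ × ℝ => fderiv ℝ g p ((1:ℝ), (0:ℝ)) :=
      (hV.continuous_fderiv (by norm_num)).clm_apply continuous_const
    have he : Function.uncurry W = fun p : ℝ × ℝ => fderiv ℝ g p ((1:ℝ), (0:ℝ)) := by
      ext p; simp [Function.uncurry, hWdef]
    rw [he]; exact h1
  have hWx : ∀ t y, W t (y + 1) = W t y := by
    intro t y
    have hper : ∀ q : ℝ × ℝ, g (q + (0, 1)) = g q := by
      intro q
      show V (q.1 + 0) (q.2 + 1) = V q.1 q.2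
      rw [add_zero, hVx]
    have h := fderiv_periodic_shift hgd (0, 1) hper (t, y)
    have he : ((t, y + 1) : ℝ × ℝ) = (t, y) + (0, 1) := by simp
    show fderiv ℝ g (t, y + 1) (1, 0) = fderiv ℝ g (t, y) (1, 0)
    rw [he, h]
  have hWt : ∀ t y, W (t + T₀) y = W t y := by
    intro t y
    have hper : ∀ q : ℝ × ℝ, g (q + (T₀, 0)) = g q := by
      intro q
      show V (q.1 + T₀) (q.2 + 0) = V q.1 q.2
      rw [add_zero, hVt]
    have h := fderiv_periodic_shift hgd (T₀, 0) hper (t, y)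
    have he : ((t + T₀, y) : ℝ × ℝ) = (t, y) + (T₀, 0) := by simp
    show fderiv ℝ g (t + T₀, y) (1, 0) = fderiv ℝ g (t, y) (1, 0)
    rw [he, h]
  obtain ⟨M₁, hM₁⟩ := bdd_of_doubly_periodic W T₀ hT₀ hWc hWx hWt
  have hM₁0 : 0 ≤ M₁ := le_trans (abs_nonneg _) (hM₁ 0 0)
  -- the period
  set L : ℝ := (k₂ : ℝ) * T₀ with hLdef
  have hL0 : 0 < L := mul_pos (by exact_mod_cast hk₂) hT₀
  -- the final constant
  refine ⟨((k₁ : ℝ) / L) ^ 2 / 2 + 3 * M₀ + M₁ * L, ?_⟩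
  intro x hx2 hode hwind
  have hx1 : Differentiable ℝ x := hx2.differentiable (by norm_num)
  have hx2' : ContDiff ℝ ((1 : WithTop ℕ∞) + 1) x := by
    have : ((1 : WithTop ℕ∞) + 1) = 2 := by norm_num
    rw [this]; exact hx2
  have hdx : ContDiff ℝ 1 (deriv x) := (contDiff_succ_iff_deriv.mp hx2').2.2
  have hdxd : Differentiable ℝ (deriv x) := hdx.differentiable (by norm_num)
  -- the partial derivative in x
  have hVd : ∀ t y, HasDerivAt (V t) (fderiv ℝ g (t, y) (0, 1)) y := by
    intro t y
    have h1 : HasFDerivAt g (fderiv ℝ g (t, y)) (t, y) := (hgd _).hasFDerivAt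
    have h2 : HasDerivAt (fun z => ((t, z) : ℝ × ℝ)) (0, 1) y :=
      (hasDerivAt_const y t).prodMk (hasDerivAt_id y)
    exact h1.comp_hasDerivAt y h2
  -- the energy and its derivative
  set E : ℝ → ℝ := fun s => (deriv x s) ^ 2 / 2 + V s (x s) with hEdef
  have hEd : ∀ t, HasDerivAt E (W t (x t)) t := by
    intro t
    have h1 : HasDerivAt (deriv x) (deriv (deriv x) t) t := (hdxd t).hasDerivAt
    have hsq : HasDerivAt (fun s => (deriv x s) ^ 2 / 2)
        (deriv x t * deriv (deriv x) t) t := by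
      exact ((h1.fun_pow 2).div_const 2).congr_deriv (by push_cast; ring)
    have hcv : HasDerivAt (fun s => ((s, x s) : ℝ × ℝ)) (1, deriv x t) t :=
      (hasDerivAt_id t).prodMk (hx1 t).hasDerivAt
    have hcomp : HasDerivAt (fun s => g (s, x s))
        (fderiv ℝ g (t, x t) (1, deriv x t)) t :=
      by exact (hgd (t, x t)).hasFDerivAt.comp_hasDerivAt t hcv
    have hsum : HasDerivAt E
        (deriv x t * deriv (deriv x) t + fderiv ℝ g (t, x t) (1, deriv x t)) t :=
      hsq.add hcomp
    have hde : ((1 : ℝ), deriv x t) = ((1:ℝ), (0:ℝ)) + deriv x t • ((0:ℝ), (1:ℝ)) := by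
      simp [Prod.ext_iff]
    have hdv : deriv (V t) (x t) = fderiv ℝ g (t, x t) (0, 1) := (hVd t (x t)).deriv
    have hxx : deriv (deriv x) t = - fderiv ℝ g (t, x t) (0, 1) := by
      rw [← hdv]; linarith [hode t]
    have key : deriv x t * deriv (deriv x) t + fderiv ℝ g (t, x t) (1, deriv x t)
        = W t (x t) := by
      rw [hde, map_add, map_smul, smul_eq_mul, hxx]
      show deriv x t * -(fderiv ℝ g (t, x t)) (0, 1) +
        ((fderiv ℝ g (t, x t)) (1, 0) + deriv x t * (fderiv ℝ g (t, x t)) (0, 1)) =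
        (fderiv ℝ g (t, x t)) (1, 0)
      ring
    rwa [key] at hsum
  -- E is Lipschitz with constant M₁
  have hlip : ∀ s u : ℝ, |E u - E s| ≤ M₁ * |u - s| := by
    intro s u
    have := convex_univ.norm_image_sub_le_of_norm_hasDerivWithin_le
      (f := E) (f' := fun t => W t (x t))
      (fun t _ => (hEd t).hasDerivWithinAt)
      (fun t _ => by simpa [Real.norm_eq_abs] using hM₁ t (x t))
      (mem_univ s) (mem_univ u)
    simpa [Real.norm_eq_abs] using this
  -- mean value: some speed equals k₁ / L
  obtain ⟨c, hc, hslope⟩ := exists_hasDerivAt_eq_slope x (deriv x) hL0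
    hx2.continuous.continuousOn (fun t _ => (hx1 t).hasDerivAt)
  have hxL : x L = x 0 + (k₁ : ℝ) := by simpa using hwind 0
  have hdc : deriv x c = (k₁ : ℝ) / L := by
    rw [hslope, hxL, sub_zero]; ring_nf
  have hEc : E c ≤ ((k₁ : ℝ) / L) ^ 2 / 2 + M₀ := by
    have := (abs_le.mp (hM₀ c (x c))).2
    simp only [hEdef, hdc]
    linarith
  -- pointwise bound on the integrand
  have hbound : ∀ t ∈ Set.uIoc (0:ℝ) L,
      ‖(deriv x t) ^ 2 / 2 - V t (x t)‖ ≤ ((k₁ : ℝ) / L) ^ 2 / 2 + 3 * M₀ + M₁ * L := by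
    intro t ht
    rw [Set.uIoc_of_le hL0.le] at ht
    have habs : |t - c| ≤ L := by
      rw [abs_sub_le_iff]
      constructor <;> [linarith [hc.1, ht.2]; linarith [hc.2, ht.1]]
    have h1 : |E t - E c| ≤ M₁ * L :=
      le_trans (hlip c t) (mul_le_mul_of_nonneg_left habs hM₁0)
    have h2 := (abs_le.mp h1).2
    have h3 := (abs_le.mp (hM₀ t (x t))).1
    have h4 := (abs_le.mp (hM₀ t (x t))).2
    have hEt : (deriv x t) ^ 2 / 2 = E t - V t (x t) := by simp [hEdef]
    rw [Real.norm_eq_abs, abs_le]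
    have hx2pos : 0 ≤ (deriv x t) ^ 2 / 2 := by positivity
    have hkpos : 0 ≤ ((k₁ : ℝ) / L) ^ 2 / 2 := by positivity
    have hML : 0 ≤ M₁ * L := mul_nonneg hM₁0 hL0.le
    constructor
    · clear_value E L; linarith
    · clear_value E L; linarith
  have hint := intervalIntegral.norm_integral_le_of_norm_le_const hbound
  rw [Real.norm_eq_abs, sub_zero, abs_of_pos hL0] at hint
  rw [abs_mul, abs_inv, abs_of_pos hL0]
  calc L⁻¹ * |∫ t in (0:ℝ)..L, ((deriv x t) ^ 2 / 2 - V t (x t))|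
      ≤ L⁻¹ * ((((k₁ : ℝ) / L) ^ 2 / 2 + 3 * M₀ + M₁ * L) * L) :=
        mul_le_mul_of_nonneg_left hint (inv_nonneg.mpr hL0.le)
    _ = ((k₁ : ℝ) / L) ^ 2 / 2 + 3 * M₀ + M₁ * L := by
        field_simp
end
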